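/- For almost every x ∈ ℝ (Lebesgue), s(n,x)/n → 1/2 as n → ∞, where s(n,x) = Σ_{k=1}^n sin²(x(k-1)!/k). -/

import Mathlib

open Real Filter MeasureTheory intervalIntegral Finset

/-- frequency `a k = (k-1)!/k`. -/
noncomputable def aa (k : ℕ) : ℝ := ((k - 1).factorial : ℝ) / k

/-- partial sums of cosines. -/
noncomputable def S (n : ℕ) (x : ℝ) : ℝ :=
  ∑ k ∈ Finset.Icc 1 n, Real.cos (2 * aa k * x)

lemma aa_pos {k : ℕ} (hk : 1 ≤ k) : 0 < aa k := by
  have : (0:ℝ) < (k : ℝ) := by exact_mod_cast hk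
  exact div_pos (by exact_mod_cast (k-1).factorial_pos) this

lemma aa_succ_le (m : ℕ) : aa (m + 2) ≤ aa (m + 3) := by
  have h1 : aa (m + 2) = ((m+1).factorial : ℝ) / (m+2) := by
    simp [aa]
  have h2 : aa (m + 3) = ((m+2) * (m+1).factorial : ℝ) / (m+3) := by
    simp [aa, Nat.factorial_succ]
    push_cast
    ring_nf
  rw [h1, h2]
  rw [div_le_div_iff₀ (by positivity) (by positivity)]
  have h3 : ((m:ℝ)+3) ≤ ((m:ℝ)+2)*((m:ℝ)+2) := by nlinarith
  nlinarith [mul_le_mul_of_nonneg_left h3 (by positivity : (0:ℝ) ≤ ((m+1).factorial:ℝ))]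

lemma aa_mono {j k : ℕ} (hj : 2 ≤ j) (hjk : j ≤ k) : aa j ≤ aa k := by
  induction k with
  | zero => omega
  | succ n ih =>
    rcases Nat.lt_or_ge j (n+1) with h | h
    · have hn : 2 ≤ n := by omega
      have := ih (by omega)
      obtain ⟨m, rfl⟩ : ∃ m, n = m + 2 := ⟨n - 2, by omega⟩
      exact this.trans (aa_succ_le m)
    · have : j = n + 1 := by omega
      subst this; rfl

lemma aa_step (m : ℕ) : aa (m + 4) ≤ (5 / 12) * aa (m + 5) := by
  have h1 : aa (m + 4) = ((m+3).factorial : ℝ) / (m+4) := by simp [aa]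
  have h2 : aa (m + 5) = ((m+4) * (m+3).factorial : ℝ) / (m+5) := by
    have : (m + 5) - 1 = (m + 3) + 1 := by omega
    simp [aa, this, Nat.factorial_succ]
    push_cast
    ring_nf
  rw [h1, h2, mul_div_assoc']
  rw [div_le_div_iff₀ (by positivity) (by positivity)]
  have hf : (1:ℝ) ≤ ((m+3).factorial : ℝ) := by exact_mod_cast (m+3).factorial_pos
  have h3 : 12*((m:ℝ)+5) ≤ 5*(((m:ℝ)+4)*((m:ℝ)+4)) := by nlinarith
  nlinarith [mul_le_mul_of_nonneg_left h3 (by positivity : (0:ℝ) ≤ ((m+3).factorial:ℝ))]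

lemma aa_one : aa 1 = 1 := by norm_num [aa]

lemma aa_five : aa 5 = 24 / 5 := by norm_num [aa, Nat.factorial]

lemma aa_small {j k : ℕ} (hj : 1 ≤ j) (hjk : j < k) (hk : 5 ≤ k) :
    aa j ≤ (5 / 12) * aa k := by
  obtain ⟨m, rfl⟩ : ∃ m, k = m + 5 := ⟨k - 5, by omega⟩
  have hstep := aa_step m
  rcases eq_or_lt_of_le hj with h1 | h2
  · -- j = 1
    have h5 : aa 5 ≤ aa (m + 5) := aa_mono (by norm_num) (by omega)
    rw [← h1, aa_one]
    rw [aa_five] at h5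
    linarith
  · -- 2 ≤ j
    have hmono : aa j ≤ aa (m + 4) := aa_mono (by omega) (by omega)
    linarith

/-- separation of frequencies -/
lemma aa_sep {j k : ℕ} (hj : 1 ≤ j) (hjk : j < k) : aa k ≤ 12 * |aa k - aa j| := by
  rcases Nat.lt_or_ge k 5 with hk | hk
  · have h1 := le_abs_self (aa k - aa j)
    have h2 := neg_abs_le (aa k - aa j)
    interval_cases k <;> interval_cases j <;>
      (norm_num [aa, Nat.factorial] at h1 h2 ⊢) <;> linarith
  · have hs := aa_small hj hjk hk
    have hpos := aa_pos (show 1 ≤ k by omega)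
    have habs : |aa k - aa j| = aa k - aa j := abs_of_nonneg (by linarith)
    rw [habs]
    linarith

/-- summability-type bound: `k * 2^k ≤ 16 * (k-1)!`. -/
lemma nat_bound_aux : ∀ m : ℕ, (m + 4) * 2 ^ (m + 4) ≤ 16 * (m + 3).factorial := by
  intro m
  induction m with
  | zero => decide
  | succ p ih =>
    have h1 : 2 * (p + 5) ≤ (p + 4) * (p + 4) := by nlinarith
    calc (p + 1 + 4) * 2 ^ (p + 1 + 4) = (2 * (p + 5)) * 2 ^ (p + 4) := by ring
      _ ≤ ((p + 4) * (p + 4)) * 2 ^ (p + 4) := Nat.mul_le_mul_right _ h1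
      _ = (p + 4) * ((p + 4) * 2 ^ (p + 4)) := by ring
      _ ≤ (p + 4) * (16 * (p + 3).factorial) := Nat.mul_le_mul_left _ ih
      _ = 16 * (p + 1 + 3).factorial := by
          have e : p + 1 + 3 = (p + 3) + 1 := by omega
          rw [e, Nat.factorial_succ (p + 3)]; ring

lemma nat_bound : ∀ k : ℕ, 1 ≤ k → k * 2 ^ k ≤ 16 * (k - 1).factorial := by
  intro k hk
  rcases Nat.lt_or_ge k 4 with h | h
  · interval_cases k <;> decide
  · obtain ⟨m, rfl⟩ : ∃ m, k = m + 4 := ⟨k - 4, by omega⟩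
    have : (m + 4) - 1 = m + 3 := by omega
    rw [this]
    exact nat_bound_aux m

lemma inv_aa_le {k : ℕ} (hk : 1 ≤ k) : 1 / aa k ≤ 16 * (1 / 2) ^ k := by
  have hfac : (0:ℝ) < ((k-1).factorial : ℝ) := by exact_mod_cast (k-1).factorial_pos
  have hk0 : (0:ℝ) < (k:ℝ) := by exact_mod_cast hk
  have h2 : (0:ℝ) < 2 ^ k := by positivity
  have h1 : 1 / aa k = (k:ℝ) / ((k-1).factorial : ℝ) := by
    rw [aa, one_div_div]
  rw [h1, show (16:ℝ) * (1/2)^k = 16 / 2^k by rw [div_pow, one_pow]; ring]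
  rw [div_le_div_iff₀ hfac h2]
  have := nat_bound k hk
  calc (k:ℝ) * 2 ^ k = ((k * 2 ^ k : ℕ) : ℝ) := by push_cast; ring
    _ ≤ ((16 * (k-1).factorial : ℕ) : ℝ) := by exact_mod_cast this
    _ = 16 * ((k-1).factorial : ℝ) := by push_cast; ring

lemma inv_aa_sum_le (n : ℕ) : ∑ k ∈ Finset.Icc 1 n, (1 / aa k) ≤ 32 := by
  calc ∑ k ∈ Finset.Icc 1 n, (1 / aa k)
      ≤ ∑ k ∈ Finset.Icc 1 n, 16 * (1/2:ℝ) ^ k := by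
        refine Finset.sum_le_sum fun k hk => inv_aa_le ?_
        exact (Finset.mem_Icc.mp hk).1
    _ ≤ ∑ k ∈ Finset.range (n+1), 16 * (1/2:ℝ) ^ k := by
        refine Finset.sum_le_sum_of_subset_of_nonneg ?_ fun k _ _ => by positivity
        intro k hk
        rw [Finset.mem_range]
        have := (Finset.mem_Icc.mp hk).2
        omega
    _ = 16 * ∑ k ∈ Finset.range (n+1), (1/2:ℝ) ^ k := by rw [Finset.mul_sum]
    _ ≤ 16 * 2 := by
        have := sum_geometric_two_le (n+1)
        linarith
    _ = 32 := by norm_num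

lemma integral_cos_mul_bound {c : ℝ} (hc : c ≠ 0) (T : ℝ) :
    |∫ x in (-T)..T, Real.cos (c * x)| ≤ 2 / |c| := by
  have h : (∫ x in (-T)..T, Real.cos (c * x))
      = c⁻¹ * (Real.sin (c * T) - Real.sin (c * -T)) := by
    rw [intervalIntegral.integral_comp_mul_left Real.cos hc, integral_cos, smul_eq_mul]
  rw [h, mul_neg, Real.sin_neg, sub_neg_eq_add]
  rw [abs_mul, abs_inv]
  have hs : |Real.sin (c * T) + Real.sin (c * T)| ≤ 2 := by
    have h1 := Real.neg_one_le_sin (c * T)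
    have h2 := Real.sin_le_one (c * T)
    rw [abs_le]; constructor <;> linarith
  have hcpos : 0 < |c| := abs_pos.mpr hc
  calc |c|⁻¹ * |Real.sin (c * T) + Real.sin (c * T)| ≤ |c|⁻¹ * 2 := by
        exact mul_le_mul_of_nonneg_left hs (by positivity)
    _ = 2 / |c| := by rw [inv_mul_eq_div]


lemma cos_cont (c : ℝ) : Continuous fun x : ℝ => Real.cos (c * x) :=
  Real.continuous_cos.comp (continuous_const.mul continuous_id)

lemma pair_bound_ne {T : ℝ} (hT : 0 ≤ T) {k j : ℕ} (hk : 1 ≤ k) (hj : 1 ≤ j)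
    (hne : j < k) :
    ∫ x in (-T)..T, Real.cos (2 * aa k * x) * Real.cos (2 * aa j * x) ≤
      12 / aa k + 12 / aa j := by
  have hak := aa_pos hk
  have haj := aa_pos hj
  have hsep := aa_sep hj hne
  have habs : 0 < |aa k - aa j| := by
    by_contra h
    push_neg at h
    have : |aa k - aa j| = 0 := le_antisymm h (abs_nonneg _)
    rw [this] at hsep; linarith
  have hd : 2 * aa k - 2 * aa j ≠ 0 := by
    intro h
    have : aa k - aa j = 0 := by linarith
    rw [this, abs_zero] at habs; exact lt_irrefl 0 habs
  have hs : 2 * aa k + 2 * aa j ≠ 0 := by positivity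
  have hx : ∀ x : ℝ, Real.cos (2 * aa k * x) * Real.cos (2 * aa j * x)
      = (Real.cos ((2 * aa k - 2 * aa j) * x) + Real.cos ((2 * aa k + 2 * aa j) * x)) / 2 := by
    intro x
    have h := Real.two_mul_cos_mul_cos (2 * aa k * x) (2 * aa j * x)
    rw [show 2 * aa k * x - 2 * aa j * x = (2 * aa k - 2 * aa j) * x by ring,
        show 2 * aa k * x + 2 * aa j * x = (2 * aa k + 2 * aa j) * x by ring] at h
    linarith
  have hint : (∫ x in (-T)..T, Real.cos (2 * aa k * x) * Real.cos (2 * aa j * x))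
      = ((∫ x in (-T)..T, Real.cos ((2 * aa k - 2 * aa j) * x))
        + ∫ x in (-T)..T, Real.cos ((2 * aa k + 2 * aa j) * x)) / 2 := by
    rw [show (fun x => Real.cos (2 * aa k * x) * Real.cos (2 * aa j * x))
        = fun x => (Real.cos ((2 * aa k - 2 * aa j) * x)
          + Real.cos ((2 * aa k + 2 * aa j) * x)) / 2 from funext hx]
    rw [intervalIntegral.integral_div, intervalIntegral.integral_add
      ((cos_cont _).intervalIntegrable _ _) ((cos_cont _).intervalIntegrable _ _)]
  rw [hint]
  have h1 := integral_cos_mul_bound hd T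
  have h2 := integral_cos_mul_bound hs T
  -- bound 2/|d| : |d| = 2|aa k - aa j| ≥ aa k / 6
  have hdabs : |2 * aa k - 2 * aa j| = 2 * |aa k - aa j| := by
    rw [show 2 * aa k - 2 * aa j = 2 * (aa k - aa j) by ring, abs_mul]
    norm_num
  have hb1 : 2 / |2 * aa k - 2 * aa j| ≤ 12 / aa k := by
    rw [hdabs]
    rw [div_le_div_iff₀ (by linarith) hak]
    nlinarith
  have hsabs : |2 * aa k + 2 * aa j| = 2 * aa k + 2 * aa j := abs_of_pos (by positivity)
  have hb2 : 2 / |2 * aa k + 2 * aa j| ≤ 12 / aa j := by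
    rw [hsabs, div_le_div_iff₀ (by positivity) haj]
    nlinarith
  have e1 := (le_abs_self _).trans h1
  have e2 := (le_abs_self _).trans h2
  have p1 : 0 < 12 / aa k := by positivity
  have p2 : 0 < 12 / aa j := by positivity
  linarith

lemma pair_bound {T : ℝ} (hT : 0 ≤ T) {k j : ℕ} (hk : 1 ≤ k) (hj : 1 ≤ j) :
    ∫ x in (-T)..T, Real.cos (2 * aa k * x) * Real.cos (2 * aa j * x) ≤
      (if k = j then 2 * T else 0) + (12 / aa k + 12 / aa j) := by
  have hak := aa_pos hk
  have haj := aa_pos hj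
  rcases eq_or_ne k j with h | h
  · subst h
    rw [if_pos rfl]
    have hb : (∫ x in (-T)..T, Real.cos (2 * aa k * x) * Real.cos (2 * aa k * x)) ≤ 2 * T := by
      calc (∫ x in (-T)..T, Real.cos (2 * aa k * x) * Real.cos (2 * aa k * x))
          ≤ ∫ _x in (-T)..T, (1:ℝ) := by
            apply intervalIntegral.integral_mono_on (by linarith)
              (((cos_cont _).mul (cos_cont _)).intervalIntegrable _ _)
              (intervalIntegrable_const)
            intro x _
            have h1 := Real.neg_one_le_cos (2 * aa k * x)
            have h2 := Real.cos_le_one (2 * aa k * x)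
            simp only [Pi.mul_apply]
            nlinarith
        _ = 2 * T := by simp; ring
    have : 0 < 12 / aa k := by positivity
    linarith
  · rw [if_neg h, zero_add]
    rcases Nat.lt_or_ge j k with hlt | hge
    · exact pair_bound_ne hT hk hj hlt
    · have hlt : k < j := by omega
      have := pair_bound_ne hT hj hk hlt
      rw [show (fun x => Real.cos (2 * aa k * x) * Real.cos (2 * aa j * x))
          = fun x => Real.cos (2 * aa j * x) * Real.cos (2 * aa k * x) from
          funext fun x => mul_comm _ _]
      linarith

lemma moment {T : ℝ} (hT : 0 ≤ T) (n : ℕ) :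
    ∫ x in (-T)..T, (S n x) ^ 2 ≤ (2 * T + 768) * n := by
  have hSq : (fun x => (S n x) ^ 2) = fun x => ∑ k ∈ Finset.Icc 1 n,
      ∑ j ∈ Finset.Icc 1 n, Real.cos (2 * aa k * x) * Real.cos (2 * aa j * x) := by
    funext x
    rw [S, sq, Finset.sum_mul_sum]
  have hint : (∫ x in (-T)..T, (S n x) ^ 2)
      = ∑ k ∈ Finset.Icc 1 n, ∑ j ∈ Finset.Icc 1 n,
          ∫ x in (-T)..T, Real.cos (2 * aa k * x) * Real.cos (2 * aa j * x) := by
    rw [hSq]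
    rw [intervalIntegral.integral_finset_sum (fun k _ => by
      apply Continuous.intervalIntegrable
      exact continuous_finset_sum _ fun j _ => (cos_cont _).mul (cos_cont _))]
    refine Finset.sum_congr rfl fun k _ => ?_
    exact intervalIntegral.integral_finset_sum (fun j _ =>
      ((cos_cont _).mul (cos_cont _)).intervalIntegrable _ _)
  rw [hint]
  have hbound : ∑ k ∈ Finset.Icc 1 n, ∑ j ∈ Finset.Icc 1 n,
      (∫ x in (-T)..T, Real.cos (2 * aa k * x) * Real.cos (2 * aa j * x))
      ≤ ∑ k ∈ Finset.Icc 1 n, ∑ j ∈ Finset.Icc 1 n,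
        ((if k = j then 2 * T else 0) + (12 / aa k + 12 / aa j)) := by
    refine Finset.sum_le_sum fun k hk => Finset.sum_le_sum fun j hj => ?_
    exact pair_bound hT (Finset.mem_Icc.mp hk).1 (Finset.mem_Icc.mp hj).1
  refine hbound.trans ?_
  have hsplit : ∑ k ∈ Finset.Icc 1 n, ∑ j ∈ Finset.Icc 1 n,
      ((if k = j then 2 * T else 0) + (12 / aa k + 12 / aa j))
      = (∑ k ∈ Finset.Icc 1 n, ∑ j ∈ Finset.Icc 1 n, (if k = j then 2 * T else 0))
        + ∑ k ∈ Finset.Icc 1 n, ∑ j ∈ Finset.Icc 1 n, (12 / aa k + 12 / aa j) := by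
    rw [← Finset.sum_add_distrib]
    refine Finset.sum_congr rfl fun k _ => ?_
    rw [← Finset.sum_add_distrib]
  rw [hsplit]
  have hcard : (Finset.Icc 1 n).card = n := by rw [Nat.card_Icc]; omega
  have hdiag : (∑ k ∈ Finset.Icc 1 n, ∑ j ∈ Finset.Icc 1 n,
      (if k = j then 2 * T else 0)) = 2 * T * n := by
    have : ∀ k ∈ Finset.Icc 1 n, (∑ j ∈ Finset.Icc 1 n, (if k = j then 2 * T else 0))
        = 2 * T := by
      intro k hk
      rw [Finset.sum_ite_eq, if_pos hk]
    rw [Finset.sum_congr rfl this, Finset.sum_const, hcard, nsmul_eq_mul]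
    ring
  have hoff : ∑ k ∈ Finset.Icc 1 n, ∑ j ∈ Finset.Icc 1 n, (12 / aa k + 12 / aa j)
      ≤ 768 * n := by
    set C := ∑ k ∈ Finset.Icc 1 n, (12 / aa k) with hCdef
    have hC : C ≤ 384 := by
      have h0 := inv_aa_sum_le n
      have he : C = 12 * ∑ k ∈ Finset.Icc 1 n, (1 / aa k) := by
        rw [hCdef, Finset.mul_sum]
        exact Finset.sum_congr rfl fun k _ => by ring
      rw [he]; linarith
    have hnn : (0:ℝ) ≤ (n:ℝ) := Nat.cast_nonneg n
    have heq : ∑ k ∈ Finset.Icc 1 n, ∑ j ∈ Finset.Icc 1 n, (12 / aa k + 12 / aa j)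
        = (n:ℝ) * C + (n:ℝ) * C := by
      calc ∑ k ∈ Finset.Icc 1 n, ∑ j ∈ Finset.Icc 1 n, (12 / aa k + 12 / aa j)
          = ∑ k ∈ Finset.Icc 1 n, ((n:ℝ) * (12 / aa k) + C) := by
            refine Finset.sum_congr rfl fun k _ => ?_
            rw [Finset.sum_add_distrib, Finset.sum_const, hcard, nsmul_eq_mul]
        _ = (∑ k ∈ Finset.Icc 1 n, (n:ℝ) * (12 / aa k))
            + ∑ _k ∈ Finset.Icc 1 n, C := Finset.sum_add_distrib
        _ = (n:ℝ) * C + (n:ℝ) * C := by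
            rw [← Finset.mul_sum, Finset.sum_const, hcard, nsmul_eq_mul, ← hCdef]
    rw [heq]
    nlinarith
  calc (∑ k ∈ Finset.Icc 1 n, ∑ j ∈ Finset.Icc 1 n, (if k = j then 2 * T else 0))
        + ∑ k ∈ Finset.Icc 1 n, ∑ j ∈ Finset.Icc 1 n, (12 / aa k + 12 / aa j)
      ≤ 2 * T * n + 768 * n := by rw [hdiag]; linarith
    _ = (2 * T + 768) * n := by ring

lemma S_cont (n : ℕ) : Continuous (S n) :=
  continuous_finset_sum _ fun _ _ => cos_cont _

lemma key_sq (T : ℕ) : ∀ᵐ x ∂(volume.restrict (Set.Icc (-(T:ℝ)) (T:ℝ))),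
    Filter.Tendsto (fun m : ℕ => S (m^2) x / ((m:ℝ)^2)) Filter.atTop (nhds 0) := by
  set μ := volume.restrict (Set.Icc (-(T:ℝ)) (T:ℝ)) with hμ
  set K : ℝ := 2*(T:ℝ) + 768 with hK
  have hTnn : (0:ℝ) ≤ (T:ℝ) := Nat.cast_nonneg T
  have hmom : ∀ m : ℕ, ∫ x, (S (m^2) x / ((m:ℝ)^2))^2 ∂μ ≤ K / (m:ℝ)^2 := by
    intro m
    rcases Nat.eq_zero_or_pos m with rfl | hm
    · simp [S]
    · have hm1 : (1:ℝ) ≤ (m:ℝ) := by exact_mod_cast hm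
      have heq : ∫ x, (S (m^2) x / ((m:ℝ)^2))^2 ∂μ
          = (∫ x, (S (m^2) x)^2 ∂μ) / (((m:ℝ)^2)^2) := by
        rw [← MeasureTheory.integral_div]
        congr 1; funext x; rw [div_pow]
      have hicc : ∫ x, (S (m^2) x)^2 ∂μ = ∫ x in (-(T:ℝ))..(T:ℝ), (S (m^2) x)^2 := by
        rw [hμ, intervalIntegral.integral_of_le (by linarith : -(T:ℝ) ≤ (T:ℝ))]
        exact MeasureTheory.integral_Icc_eq_integral_Ioc
      have hmo := moment hTnn (m^2)
      have hcast : ((m^2 : ℕ):ℝ) = (m:ℝ)^2 := by push_cast; ring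
      rw [hcast] at hmo
      rw [heq, hicc]
      have h5 : (∫ x in (-(T:ℝ))..(T:ℝ), (S (m^2) x)^2) / (((m:ℝ)^2)^2)
          ≤ (K * (m:ℝ)^2) / (((m:ℝ)^2)^2) := by gcongr
      refine h5.trans (le_of_eq ?_)
      field_simp
  have hintg : ∀ m : ℕ, Integrable (fun x => (S (m^2) x / ((m:ℝ)^2))^2) μ := by
    intro m
    rw [hμ]
    exact (((S_cont (m^2)).div_const _).pow 2).integrableOn_Icc
  have hlint : ∀ m : ℕ, (∫⁻ x, ENNReal.ofReal ((S (m^2) x / ((m:ℝ)^2))^2) ∂μ)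
      ≤ ENNReal.ofReal (K / (m:ℝ)^2) := by
    intro m
    rw [← MeasureTheory.ofReal_integral_eq_lintegral_ofReal (hintg m)
      (Filter.Eventually.of_forall fun x => sq_nonneg _)]
    exact ENNReal.ofReal_le_ofReal (hmom m)
  have hsum : Summable (fun m : ℕ => K / (m:ℝ)^2) := by
    have h0 := (Real.summable_one_div_nat_pow (p := 2)).mpr (by norm_num)
    have h1 := h0.mul_left K
    refine h1.congr fun m => ?_
    rw [mul_one_div]
  have htsum : (∑' m : ℕ, ∫⁻ x, ENNReal.ofReal ((S (m^2) x / ((m:ℝ)^2))^2) ∂μ) ≠ ⊤ := by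
    refine ne_top_of_le_ne_top ?_ (ENNReal.tsum_le_tsum hlint)
    rw [← ENNReal.ofReal_tsum_of_nonneg (fun m => by positivity) hsum]
    exact ENNReal.ofReal_ne_top
  have hmeas : ∀ m : ℕ, Measurable (fun x : ℝ => ENNReal.ofReal ((S (m^2) x / ((m:ℝ)^2))^2)) :=
    fun m => ENNReal.measurable_ofReal.comp
      ((((S_cont (m^2)).div_const _).pow 2).measurable)
  rw [← MeasureTheory.lintegral_tsum (fun m => (hmeas m).aemeasurable)] at htsum
  have hae := MeasureTheory.ae_lt_top (Measurable.ennreal_tsum hmeas) htsum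
  filter_upwards [hae] with x hx
  have h1 : Filter.Tendsto (fun m => ENNReal.ofReal ((S (m^2) x / ((m:ℝ)^2))^2))
      Filter.atTop (nhds 0) :=
    ENNReal.tendsto_atTop_zero_of_tsum_ne_top hx.ne
  have h2 : Filter.Tendsto (fun m => (S (m^2) x / ((m:ℝ)^2))^2) Filter.atTop (nhds 0) := by
    have h3 := (ENNReal.tendsto_toReal (by simp : (0:ENNReal) ≠ ⊤)).comp h1
    simp only [Function.comp_def] at h3
    have he : (fun m => (ENNReal.ofReal ((S (m^2) x / ((m:ℝ)^2))^2)).toReal)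
        = fun m => (S (m^2) x / ((m:ℝ)^2))^2 :=
      funext fun m => ENNReal.toReal_ofReal (sq_nonneg _)
    rw [he] at h3
    simpa using h3
  rw [tendsto_zero_iff_abs_tendsto_zero]
  have h5 : Filter.Tendsto (fun m : ℕ => Real.sqrt ((S (m^2) x / ((m:ℝ)^2))^2))
      Filter.atTop (nhds 0) := by
    have := (Real.continuous_sqrt.tendsto 0).comp h2
    simp only [Function.comp_def] at this
    simpa using this
  exact h5.congr fun m => Real.sqrt_sq_eq_abs _

lemma S_diff_bound (x : ℝ) {p q : ℕ} (hpq : p ≤ q) : |S q x - S p x| ≤ ((q - p : ℕ) : ℝ) := by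
  have e : ∀ r : ℕ, Finset.Icc 1 r = Finset.Ioc 0 r := fun r => by
    ext t; simp; omega
  have hsplit : S p x + ∑ k ∈ Finset.Ioc p q, Real.cos (2 * aa k * x) = S q x := by
    rw [S, S, e, e]
    exact Finset.sum_Ioc_consecutive _ (Nat.zero_le p) hpq
  have hd : S q x - S p x = ∑ k ∈ Finset.Ioc p q, Real.cos (2 * aa k * x) := by linarith
  rw [hd]
  calc |∑ k ∈ Finset.Ioc p q, Real.cos (2 * aa k * x)|
      ≤ ∑ k ∈ Finset.Ioc p q, |Real.cos (2 * aa k * x)| :=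
        Finset.abs_sum_le_sum_abs _ _
    _ ≤ (Finset.Ioc p q).card • (1:ℝ) :=
        Finset.sum_le_card_nsmul _ _ 1 fun k _ => Real.abs_cos_le_one _
    _ = ((q - p : ℕ) : ℝ) := by rw [Nat.card_Ioc, nsmul_eq_mul, mul_one]

lemma key_all (T : ℕ) : ∀ᵐ x ∂(volume.restrict (Set.Icc (-(T:ℝ)) (T:ℝ))),
    Filter.Tendsto (fun n : ℕ => S n x / (n:ℝ)) Filter.atTop (nhds 0) := by
  filter_upwards [key_sq T] with x hx
  have habs : Filter.Tendsto (fun m : ℕ => |S (m^2) x| / ((m:ℝ)^2)) Filter.atTop (nhds 0) := by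
    have h0 := hx.abs
    simp only [abs_zero] at h0
    refine h0.congr fun m => ?_
    rw [abs_div, abs_of_nonneg (by positivity : (0:ℝ) ≤ (m:ℝ)^2)]
  have hrest : Filter.Tendsto (fun m : ℕ => (2*(m:ℝ)+1) / ((m:ℝ)^2)) Filter.atTop (nhds 0) := by
    apply squeeze_zero' (Filter.Eventually.of_forall fun m => by positivity)
      ?_ (tendsto_const_div_atTop_nhds_zero_nat 3)
    filter_upwards [Filter.eventually_ge_atTop 1] with m hm
    have hm1 : (1:ℝ) ≤ (m:ℝ) := by exact_mod_cast hm
    rw [div_le_div_iff₀ (by positivity) (by positivity)]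
    nlinarith
  have hh : Filter.Tendsto (fun m : ℕ => |S (m^2) x| / ((m:ℝ)^2) + (2*(m:ℝ)+1)/((m:ℝ)^2))
      Filter.atTop (nhds 0) := by
    simpa using habs.add hrest
  have hsqrt : Filter.Tendsto (fun n : ℕ => Nat.sqrt n) Filter.atTop Filter.atTop :=
    Filter.tendsto_atTop_atTop.mpr fun b => ⟨b*b, fun n hn => Nat.le_sqrt.mpr hn⟩
  refine squeeze_zero_norm' ?_ (hh.comp hsqrt)
  filter_upwards [Filter.eventually_ge_atTop 1] with n hn
  simp only [Function.comp_apply]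
  set m := Nat.sqrt n with hmdef
  have hm1 : 1 ≤ m := Nat.le_sqrt.mpr (by omega)
  have hmn : m^2 ≤ n := Nat.sqrt_le' n
  have hn2 : n ≤ m^2 + 2*m := by
    have h0 : n < (m+1)^2 := Nat.lt_succ_sqrt' n
    have h0' : n < m^2 + 2*m + 1 := lt_of_lt_of_eq h0 (by ring)
    exact Nat.lt_succ_iff.mp h0'
  have hmR : (1:ℝ) ≤ (m:ℝ) := by exact_mod_cast hm1
  have hnR : (1:ℝ) ≤ (n:ℝ) := by exact_mod_cast hn
  have hm2n : ((m:ℝ)^2) ≤ (n:ℝ) := by exact_mod_cast hmn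
  have hdiff := S_diff_bound x hmn
  have hcast : ((n - m^2 : ℕ) : ℝ) ≤ 2*(m:ℝ) + 1 := by
    have : n - m^2 ≤ 2*m := Nat.sub_le_iff_le_add.mpr (by rw [Nat.add_comm]; exact hn2)
    have h2 : ((n - m^2 : ℕ) : ℝ) ≤ ((2*m : ℕ) : ℝ) := by exact_mod_cast this
    push_cast at h2 ⊢
    linarith
  have hSn : |S n x| ≤ |S (m^2) x| + (2*(m:ℝ) + 1) := by
    have := abs_sub_abs_le_abs_sub (S n x) (S (m^2) x)
    linarith [hdiff.trans hcast]
  calc ‖S n x / (n:ℝ)‖ = |S n x| / (n:ℝ) := by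
        rw [Real.norm_eq_abs, abs_div, abs_of_nonneg (by positivity : (0:ℝ) ≤ (n:ℝ))]
    _ ≤ (|S (m^2) x| + (2*(m:ℝ) + 1)) / (n:ℝ) := by gcongr
    _ ≤ (|S (m^2) x| + (2*(m:ℝ) + 1)) / ((m:ℝ)^2) := by
        gcongr
    _ = |S (m^2) x| / ((m:ℝ)^2) + (2*(m:ℝ)+1)/((m:ℝ)^2) := add_div _ _ _

lemma S_tendsto_ae : ∀ᵐ x : ℝ, Filter.Tendsto (fun n => S n x / n) Filter.atTop (nhds 0) := by
  have hT : ∀ T : ℕ, volume ({x : ℝ | ¬ Filter.Tendsto (fun n : ℕ => S n x / (n:ℝ))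
      Filter.atTop (nhds 0)} ∩ Set.Icc (-(T:ℝ)) (T:ℝ)) = 0 := by
    intro T
    have h := key_all T
    rw [MeasureTheory.ae_iff] at h
    rwa [MeasureTheory.Measure.restrict_apply' measurableSet_Icc] at h
  rw [MeasureTheory.ae_iff]
  refine measure_mono_null ?_ (measure_iUnion_null fun T : ℕ => hT T)
  intro x hx
  refine Set.mem_iUnion.mpr ⟨⌈|x|⌉₊, hx, ?_⟩
  have h1 : |x| ≤ (⌈|x|⌉₊ : ℝ) := Nat.le_ceil _
  constructor
  · have := neg_abs_le x; linarith
  · have := le_abs_self x; linarith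

noncomputable def s (n : ℕ) (x : ℝ) : ℝ :=
  ∑ k ∈ Finset.Icc 1 n, Real.sin (x * (k - 1).factorial / k) ^ 2

theorem stmt_16 :
    ∀ᵐ x : ℝ, Filter.Tendsto (fun n => s n x / n) Filter.atTop (nhds (1 / 2)) := by
  filter_upwards [S_tendsto_ae] with x hx
  have key : ∀ n : ℕ, s n x = n / 2 - S n x / 2 := by
    intro n
    have : ∀ k ∈ Finset.Icc 1 n, Real.sin (x * (k - 1).factorial / k) ^ 2
        = 1 / 2 - Real.cos (2 * aa k * x) / 2 := by
      intro k hk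
      rw [show x * ((k:ℕ) - 1).factorial / k = aa k * x by rw [aa]; ring,
        Real.sin_sq_eq_half_sub]
      ring_nf
    rw [s, Finset.sum_congr rfl this, Finset.sum_sub_distrib, Finset.sum_const,
      Nat.card_Icc, S, Finset.sum_div]
    simp
    ring
  have h2 : Filter.Tendsto (fun n : ℕ => 1 / 2 - (S n x / n) / 2) Filter.atTop
      (nhds (1 / 2)) := by
    have := ((hx.div_const 2).const_sub (1/2 : ℝ))
    simpa using this
  apply h2.congr'
  filter_upwards [Filter.eventually_ge_atTop 1] with n hn
  have hn' : (n : ℝ) ≠ 0 := by positivity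
  have e1 : (n:ℝ)/2/n = 1/2 := by
    rw [div_div, mul_comm, ← div_div, div_self hn']
  have e2 : S n x/2/n = S n x/n/2 := by
    rw [div_div, div_div, mul_comm]
  rw [key n, sub_div, e1, e2]
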